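/- For every r ∈ [−1, 1], the integral over σ ∈ [−1, 1] of −r²/(1 + rσ) against the normalized semicircular density (2/π)√(1 − σ²) equals 2(√(1 − r²) − 1). -/

import Mathlib

open Real intervalIntegral Set

noncomputable def Hfun (r : ℝ) : ℝ → ℝ := fun y =>
  (2 / Real.pi) * (Real.arcsin y + r * Real.sqrt (1 - y ^ 2)
    - Real.sqrt (1 - r ^ 2) * Real.arcsin ((y + r) / (1 + r * y)))

lemma hden_pos (r : ℝ) (hr : r ∈ Set.Icc (-1 : ℝ) 1) {x : ℝ} (hx1 : -1 < x) (hx2 : x < 1) :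
    0 < 1 + r * x := by
  obtain ⟨h1, h2⟩ := hr
  rcases le_or_gt 0 r with h | h
  · nlinarith
  · nlinarith

lemma hderivH (r : ℝ) (hr : r ∈ Set.Icc (-1 : ℝ) 1) {x : ℝ} (hx1 : -1 < x) (hx2 : x < 1) :
    HasDerivAt (Hfun r) (r ^ 2 / (1 + r * x) * (2 / Real.pi * Real.sqrt (1 - x ^ 2))) x := by
  obtain ⟨hrl, hru⟩ := hr
  have hden : 0 < 1 + r * x := hden_pos r ⟨hrl, hru⟩ hx1 hx2
  have h1x : 0 < 1 - x ^ 2 := by nlinarith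
  have hsx : 0 < Real.sqrt (1 - x ^ 2) := Real.sqrt_pos.2 h1x
  have hs2 : Real.sqrt (1 - x ^ 2) ^ 2 = 1 - x ^ 2 := Real.sq_sqrt h1x.le
  have d1 : HasDerivAt Real.arcsin (1 / Real.sqrt (1 - x ^ 2)) x :=
    Real.hasDerivAt_arcsin (by linarith) (by linarith)
  have d2 : HasDerivAt (fun y : ℝ => Real.sqrt (1 - y ^ 2)) (-x / Real.sqrt (1 - x ^ 2)) x := by
    have dp : HasDerivAt (fun y : ℝ => 1 - y ^ 2) (-(2 * x)) x := by
      simpa using ((hasDerivAt_pow 2 x).const_sub 1)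
    have := (Real.hasDerivAt_sqrt h1x.ne').comp x dp
    refine this.congr_deriv ?_
    field_simp
  have d3 : HasDerivAt (fun y : ℝ => Real.sqrt (1 - r ^ 2) * Real.arcsin ((y + r) / (1 + r * y)))
      ((1 - r ^ 2) / ((1 + r * x) * Real.sqrt (1 - x ^ 2))) x := by
    by_cases hr2 : r ^ 2 = 1
    · have hc : Real.sqrt (1 - r ^ 2) = 0 := by
        rw [show (1 : ℝ) - r ^ 2 = 0 by linarith]; exact Real.sqrt_zero
      have h0 : HasDerivAt (fun y : ℝ => Real.sqrt (1 - r ^ 2) * Real.arcsin ((y + r) / (1 + r * y)))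
          0 x :=
        (hasDerivAt_const x (0 : ℝ)).congr_of_eventuallyEq
          (Filter.Eventually.of_forall fun y => by simp [hc])
      convert h0 using 1
      rw [show (1 : ℝ) - r ^ 2 = 0 by linarith, zero_div]
    · have hr2' : r ^ 2 < 1 := lt_of_le_of_ne (by nlinarith) hr2
      have hcr : 0 < Real.sqrt (1 - r ^ 2) := Real.sqrt_pos.2 (by linarith)
      have hcr2 : Real.sqrt (1 - r ^ 2) ^ 2 = 1 - r ^ 2 := Real.sq_sqrt (by linarith)
      have du : HasDerivAt (fun y : ℝ => (y + r) / (1 + r * y))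
          ((1 - r ^ 2) / (1 + r * x) ^ 2) x := by
        have dn : HasDerivAt (fun y : ℝ => y + r) 1 x := (hasDerivAt_id x).add_const r
        have dd : HasDerivAt (fun y : ℝ => 1 + r * y) r x := by
          simpa using ((hasDerivAt_id x).const_mul r).const_add 1
        have := dn.div dd hden.ne'
        refine this.congr_deriv ?_
        field_simp
        ring
      have hkey : (x + r) ^ 2 < (1 + r * x) ^ 2 := by nlinarith
      have hune1 : (x + r) / (1 + r * x) ≠ 1 := by
        intro h
        have : x + r = 1 + r * x := by
          field_simp [hden.ne', show (1:ℝ) + x * r ≠ 0 by rw [mul_comm]; exact hden.ne'] at h; linarith [h]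
        nlinarith
      have hunem1 : (x + r) / (1 + r * x) ≠ -1 := by
        intro h
        have : x + r = -(1 + r * x) := by
          rw [div_eq_iff hden.ne'] at h; linarith [h]
        nlinarith
      have darc := (Real.hasDerivAt_arcsin hunem1 hune1).comp x du
      have := darc.const_mul (Real.sqrt (1 - r ^ 2))
      refine this.congr_deriv ?_
      have husq : 1 - ((x + r) / (1 + r * x)) ^ 2 = (1 - x ^ 2) * (1 - r ^ 2) / (1 + r * x) ^ 2 := by
        field_simp [hden.ne', show (1:ℝ) + x * r ≠ 0 by rw [mul_comm]; exact hden.ne']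
        ring
      have hsq : Real.sqrt (1 - ((x + r) / (1 + r * x)) ^ 2)
          = Real.sqrt (1 - x ^ 2) * Real.sqrt (1 - r ^ 2) / (1 + r * x) := by
        rw [husq, Real.sqrt_div (mul_nonneg h1x.le (by linarith)), Real.sqrt_mul h1x.le,
          Real.sqrt_sq hden.le]
      rw [hsq, one_div_div]
      field_simp [hsx.ne', hden.ne', hcr.ne']
  have dsum := ((d1.add (d2.const_mul r)).sub d3).const_mul (2 / Real.pi)
  have hpi : (0 : ℝ) < Real.pi := Real.pi_pos
  refine dsum.congr_deriv ?_
  have : (1 : ℝ) / Real.sqrt (1 - x ^ 2) + r * (-x / Real.sqrt (1 - x ^ 2))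
      - (1 - r ^ 2) / ((1 + r * x) * Real.sqrt (1 - x ^ 2))
      = r ^ 2 * Real.sqrt (1 - x ^ 2) / (1 + r * x) := by
    field_simp [hsx.ne', hden.ne', show (1:ℝ) + x * r ≠ 0 by rw [mul_comm]; exact hden.ne']
    linear_combination (-(r ^ 2)) * hs2
  rw [this]
  ring

lemma hcontH (r : ℝ) (hr : r ∈ Set.Icc (-1 : ℝ) 1) :
    ContinuousOn (Hfun r) (Set.Icc (-1) 1) := by
  obtain ⟨hrl, hru⟩ := hr
  by_cases hr2 : r ^ 2 = 1
  · have hc : Real.sqrt (1 - r ^ 2) = 0 := by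
      rw [show (1 : ℝ) - r ^ 2 = 0 by linarith]; exact Real.sqrt_zero
    have hcont : Continuous (fun y : ℝ =>
        (2 / Real.pi) * (Real.arcsin y + r * Real.sqrt (1 - y ^ 2))) := by
      have : Continuous (fun y : ℝ => Real.sqrt (1 - y ^ 2)) :=
        Real.continuous_sqrt.comp (by continuity)
      exact continuous_const.mul (Real.continuous_arcsin.add (continuous_const.mul this))
    exact hcont.continuousOn.congr fun y hy => by simp [Hfun, hc]
  · have hr2' : r ^ 2 < 1 := lt_of_le_of_ne (by nlinarith) hr2
    have hpos : ∀ y ∈ Set.Icc (-1 : ℝ) 1, (1 : ℝ) + r * y ≠ 0 := by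
      intro y hy
      obtain ⟨h1, h2⟩ := hy
      have hy2 : y ^ 2 ≤ 1 := by nlinarith
      have : 0 < 1 + r * y := by
        nlinarith [sq_nonneg (r * y + 1), mul_nonneg (sub_nonneg.2 hr2'.le) (sq_nonneg y)]
      exact this.ne'
    have hu : ContinuousOn (fun y : ℝ => (y + r) / (1 + r * y)) (Set.Icc (-1) 1) :=
      ((continuous_id.add continuous_const).continuousOn).div
        ((continuous_const.add (continuous_const.mul continuous_id)).continuousOn) hpos
    have hs : Continuous (fun y : ℝ => Real.sqrt (1 - y ^ 2)) :=
      Real.continuous_sqrt.comp (by continuity)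
    exact continuousOn_const.mul
      (((Real.continuous_arcsin.continuousOn.add
        (continuousOn_const.mul hs.continuousOn)).sub
        (continuousOn_const.mul (Real.continuous_arcsin.comp_continuousOn hu))))

theorem stmt_2 (r : ℝ) (hr : r ∈ Set.Icc (-1 : ℝ) 1) :
    ∫ σ in (-1 : ℝ)..1, (-(r ^ 2) / (1 + r * σ)) * (2 / Real.pi * Real.sqrt (1 - σ ^ 2)) =
      2 * (Real.sqrt (1 - r ^ 2) - 1) := by
  have hpi : (0 : ℝ) < Real.pi := Real.pi_pos
  rcases eq_or_ne r 0 with h0 | h0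
  · simp [h0]
  · have hcont := hcontH r hr
    have hderiv : ∀ x ∈ Set.Ioo (-1 : ℝ) 1, HasDerivAt (Hfun r)
        (r ^ 2 / (1 + r * x) * (2 / Real.pi * Real.sqrt (1 - x ^ 2))) x :=
      fun x hx => hderivH r hr hx.1 hx.2
    have hint : IntervalIntegrable
        (fun x => r ^ 2 / (1 + r * x) * (2 / Real.pi * Real.sqrt (1 - x ^ 2)))
        MeasureTheory.volume (-1) 1 := by
      apply intervalIntegral.intervalIntegrable_deriv_of_nonneg (g := Hfun r)
      · simpa [Set.uIcc_of_le (by norm_num : (-1 : ℝ) ≤ 1)] using hcont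
      · intro x hx
        refine hderiv x ?_
        simpa using hx
      · intro x hx
        have hx' : x ∈ Set.Ioo (-1 : ℝ) 1 := by simpa using hx
        have hd := hden_pos r hr hx'.1 hx'.2
        positivity
    have heval := intervalIntegral.integral_eq_sub_of_hasDeriv_right_of_le
      (by norm_num : (-1 : ℝ) ≤ 1) hcont
      (fun x hx => (hderiv x hx).hasDerivWithinAt) hint
    have hcongr : ∀ σ : ℝ, (-(r ^ 2) / (1 + r * σ)) * (2 / Real.pi * Real.sqrt (1 - σ ^ 2))
        = -(r ^ 2 / (1 + r * σ) * (2 / Real.pi * Real.sqrt (1 - σ ^ 2))) := by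
      intro σ; ring
    simp_rw [hcongr]
    rw [intervalIntegral.integral_neg, heval]
    have e1 : Real.sqrt (1 - (1 : ℝ) ^ 2) = 0 := by norm_num
    have e2 : Real.sqrt (1 - (-1 : ℝ) ^ 2) = 0 := by norm_num
    have h3 : Real.sqrt (1 - r ^ 2) * Real.arcsin ((1 + r) / (1 + r * 1))
        = Real.sqrt (1 - r ^ 2) * (Real.pi / 2) := by
      rcases eq_or_ne r (-1) with h | h
      · simp [h]
      · have hne : (1 : ℝ) + r ≠ 0 := fun hh => h (by linarith)
        have : (1 + r) / (1 + r * 1) = 1 := by rw [mul_one]; exact div_self hne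
        rw [this, Real.arcsin_one]
    have h4 : Real.sqrt (1 - r ^ 2) * Real.arcsin ((-1 + r) / (1 + r * -1))
        = Real.sqrt (1 - r ^ 2) * (-(Real.pi / 2)) := by
      rcases eq_or_ne r 1 with h | h
      · simp [h]
      · have hne : (1 : ℝ) + r * -1 ≠ 0 := fun hh => h (by linarith)
        have : (-1 + r) / (1 + r * -1) = -1 := by rw [div_eq_iff hne]; ring
        rw [this, Real.arcsin_neg_one]
    simp only [Hfun, e1, e2, Real.arcsin_one, Real.arcsin_neg_one, h3, h4]
    field_simp
    ring
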